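/- Let X and K be topological spaces, f : X × K → ℝ a separately continuous map, and φ : K → C_p(X) the continuous map defined by φ(y)(x) = f(x,y). Suppose there exist a set Γ ⊆ ℝ^X and a sequence (𝒰ₙ)ₙ of countable covers of K such that X is σ_Γ-β-defavorable and the sequence (𝒰ₙ)ₙ is countably pair complete with respect to (φ,Γ). Then for every ε > 0 there is a residual subset R_ε of X such that for every (x,y) ∈ R_ε × K there exist a finite sequence of sets Fᵢ ∈ 𝒰ᵢ, i = 0,…,k, with y ∈ ⋂_{i≤k} Fᵢ, and a neighborhood O of (x,y) in X × K such that |f(x,y) − f(x',y')| < ε for every (x',y') ∈ O ∩ (X × ⋂_{i≤k} Fᵢ). -/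

import Mathlib

open Set Topology Filter

namespace SepJoint

/-- The list `[f 0, …, f (n-1)]` of the first `n` values of a sequence. -/
def hist {A : Type*} (f : ℕ → A) (n : ℕ) : List A := List.ofFn (fun i : Fin n => f i)

variable (X : Type*) [TopologicalSpace X]

/-- A strategy for player β in games of type `𝒥` (with points): from the list of α's
previous moves `(Uᵢ, aᵢ)`, produce β's next open set `Vₙ`. -/
abbrev BetaStrategy := List (Set X × X) → Set X

/-- A strategy for player α in games of type `𝒥`: from the list `[V₀, …, Vₙ]` of β's moves
(the last being the one to respond to), produce α's move `(Uₙ, aₙ)`. -/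
abbrev AlphaStrategy := List (Set X) → Set X × X

/-- A strategy for player β in games of type `𝒥*`: from the list of α's previous
moves `Uᵢ`, produce β's next open set `Vₙ`. -/
abbrev BetaStrategyStar := List (Set X) → Set X

/-- A strategy for player α in games of type `𝒥*`. -/
abbrev AlphaStrategyStar := List (Set X) → Set X

variable {X}

/-! ### Games of type `𝒥` (α plays pairs `(Uₙ, aₙ)`) -/

/-- α has played legally against the β-strategy `σ` at all stages `< n`:
each `Uᵢ` is a nonempty open subset of β's move `Vᵢ = σ(history)`. -/
def AlphaLegal (σ : BetaStrategy X) (U : ℕ → Set X) (a : ℕ → X) (n : ℕ) : Prop :=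
  ∀ i < n, IsOpen (U i) ∧ (U i).Nonempty ∧ U i ⊆ σ (hist (fun j => (U j, a j)) i)

/-- `σ` is a legal strategy for β: against any legal finite history it produces a nonempty
open set contained in α's previous move. -/
def BetaLegal (σ : BetaStrategy X) : Prop :=
  ∀ (U : ℕ → Set X) (a : ℕ → X) (n : ℕ), AlphaLegal σ U a n →
    IsOpen (σ (hist (fun j => (U j, a j)) n)) ∧
    (σ (hist (fun j => (U j, a j)) n)).Nonempty ∧
    ∀ m, n = m + 1 → σ (hist (fun j => (U j, a j)) n) ⊆ U m

/-- The winning condition for α in the game `𝒥_Γ` on the play with moves `(Uₙ, aₙ)`: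
for each `g ∈ Γ` there is `t ∈ ⋂ₙ Uₙ` with `g t` in the closure of `{g (aₙ) : n}`. -/
def AlphaWinsGamma (Γ : Set (X → ℝ)) (U : ℕ → Set X) (a : ℕ → X) : Prop :=
  ∀ g ∈ Γ, ∃ t ∈ (⋂ n, U n), g t ∈ closure (Set.range fun n => g (a n))

/-- The winning condition for α in the game `𝒥` on the play with moves `(Uₙ, aₙ)`:
`(⋂ₙ Uₙ) ∩ closure {aₙ : n} ≠ ∅`. -/
def AlphaWinsPlain (U : ℕ → Set X) (a : ℕ → X) : Prop :=
  ((⋂ n, U n) ∩ closure (Set.range a)).Nonempty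

/-- `σ` is a winning strategy for β in the game `𝒥_Γ`. -/
def BetaWinningGamma (Γ : Set (X → ℝ)) (σ : BetaStrategy X) : Prop :=
  BetaLegal σ ∧ ∀ U a, (∀ n, AlphaLegal σ U a n) → ¬ AlphaWinsGamma Γ U a

/-- `σ` is a winning strategy for β in the game `𝒥`. -/
def BetaWinningPlain (σ : BetaStrategy X) : Prop :=
  BetaLegal σ ∧ ∀ U a, (∀ n, AlphaLegal σ U a n) → ¬ AlphaWinsPlain U a

/-- `X` is σ_Γ-β-defavorable: β has no winning strategy in the game `𝒥_Γ`. -/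
def SigmaGammaBetaDefavorable (X : Type*) [TopologicalSpace X] (Γ : Set (X → ℝ)) : Prop :=
  ¬ ∃ σ : BetaStrategy X, BetaWinningGamma Γ σ

/-- `X` is σ-β-defavorable: β has no winning strategy in the game `𝒥`. -/
def SigmaBetaDefavorable (X : Type*) [TopologicalSpace X] : Prop :=
  ¬ ∃ σ : BetaStrategy X, BetaWinningPlain σ

/-- Given the α-strategy `τ` and β's moves `V`, α's `n`-th move `(Uₙ, aₙ) = τ [V₀, …, Vₙ]`. -/
def alphaMove (τ : AlphaStrategy X) (V : ℕ → Set X) (n : ℕ) : Set X × X :=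
  τ (hist V (n + 1))

/-- `τ` is a legal strategy for α: along any legal history of β-moves it answers with a
nonempty open subset of β's last move. -/
def AlphaStratLegal (τ : AlphaStrategy X) : Prop :=
  ∀ (V : ℕ → Set X) (n : ℕ), (IsOpen (V 0) ∧ (V 0).Nonempty) →
    (∀ i < n, IsOpen (V (i + 1)) ∧ (V (i + 1)).Nonempty ∧ V (i + 1) ⊆ (alphaMove τ V i).1) →
    IsOpen (alphaMove τ V n).1 ∧ (alphaMove τ V n).1.Nonempty ∧ (alphaMove τ V n).1 ⊆ V n

/-- `V` is a full run of legal moves of β against the α-strategy `τ`. -/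
def BetaLegalRun (τ : AlphaStrategy X) (V : ℕ → Set X) : Prop :=
  IsOpen (V 0) ∧ (V 0).Nonempty ∧
    ∀ n, IsOpen (V (n + 1)) ∧ (V (n + 1)).Nonempty ∧ V (n + 1) ⊆ (alphaMove τ V n).1

/-- `τ` is a conditionally winning strategy for α in the game `𝒥_Γ`: every compatible play
with `⋂ₙ Uₙ ≠ ∅` fulfils the winning condition for α. -/
def CondAlphaWinningGamma (Γ : Set (X → ℝ)) (τ : AlphaStrategy X) : Prop :=
  AlphaStratLegal τ ∧
    ∀ V, BetaLegalRun τ V → (⋂ n, (alphaMove τ V n).1).Nonempty →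
      AlphaWinsGamma Γ (fun n => (alphaMove τ V n).1) (fun n => (alphaMove τ V n).2)

/-- `X` is conditionally σ_Γ-α-favorable. -/
def CondSigmaGammaAlphaFavorable (X : Type*) [TopologicalSpace X] (Γ : Set (X → ℝ)) : Prop :=
  ∃ τ : AlphaStrategy X, CondAlphaWinningGamma Γ τ

/-- `τ` is a conditionally winning strategy for α in the game `𝒥`. -/
def CondAlphaWinningPlain (τ : AlphaStrategy X) : Prop :=
  AlphaStratLegal τ ∧
    ∀ V, BetaLegalRun τ V → (⋂ n, (alphaMove τ V n).1).Nonempty →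
      AlphaWinsPlain (fun n => (alphaMove τ V n).1) (fun n => (alphaMove τ V n).2)

/-- `X` is conditionally σ-α-favorable. -/
def CondSigmaAlphaFavorable (X : Type*) [TopologicalSpace X] : Prop :=
  ∃ τ : AlphaStrategy X, CondAlphaWinningPlain τ

/-! ### Games of type `𝒥*` (α plays only open sets) -/

/-- α has played legally against the β-strategy `σ` in `𝒥*` at all stages `< n`. -/
def AlphaLegalStar (σ : BetaStrategyStar X) (U : ℕ → Set X) (n : ℕ) : Prop :=
  ∀ i < n, IsOpen (U i) ∧ (U i).Nonempty ∧ U i ⊆ σ (hist U i)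

/-- `σ` is a legal strategy for β in `𝒥*`. -/
def BetaLegalStar (σ : BetaStrategyStar X) : Prop :=
  ∀ (U : ℕ → Set X) (n : ℕ), AlphaLegalStar σ U n →
    IsOpen (σ (hist U n)) ∧ (σ (hist U n)).Nonempty ∧ ∀ m, n = m + 1 → σ (hist U n) ⊆ U m

/-- The winning condition for α in the game `𝒥*_Γ` on the play with α-moves `Uₙ`:
for every sequence `(aₙ)` with `aₙ ∈ Uₙ` and every `g ∈ Γ`, there is `t ∈ ⋂ₙ Uₙ` with
`g t` in the closure of `{g (aₙ) : n}`. -/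
def AlphaWinsStar (Γ : Set (X → ℝ)) (U : ℕ → Set X) : Prop :=
  ∀ a : ℕ → X, (∀ n, a n ∈ U n) → ∀ g ∈ Γ,
    ∃ t ∈ (⋂ n, U n), g t ∈ closure (Set.range fun n => g (a n))

/-- `σ` is a winning strategy for β in the game `𝒥*_Γ`. -/
def BetaWinningStar (Γ : Set (X → ℝ)) (σ : BetaStrategyStar X) : Prop :=
  BetaLegalStar σ ∧ ∀ U, (∀ n, AlphaLegalStar σ U n) → ¬ AlphaWinsStar Γ U

/-- `X` is σ*_Γ-β-defavorable: β has no winning strategy in `𝒥*_Γ`. -/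
def SigmaStarBetaDefavorable (X : Type*) [TopologicalSpace X] (Γ : Set (X → ℝ)) : Prop :=
  ¬ ∃ σ : BetaStrategyStar X, BetaWinningStar Γ σ

/-- Given the α-strategy `τ` and β's moves `V`, α's `n`-th move `Uₙ = τ [V₀, …, Vₙ]` in `𝒥*`. -/
def alphaMoveStar (τ : AlphaStrategyStar X) (V : ℕ → Set X) (n : ℕ) : Set X :=
  τ (hist V (n + 1))

/-- `τ` is a legal strategy for α in `𝒥*`. -/
def AlphaStratLegalStar (τ : AlphaStrategyStar X) : Prop :=
  ∀ (V : ℕ → Set X) (n : ℕ), (IsOpen (V 0) ∧ (V 0).Nonempty) →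
    (∀ i < n, IsOpen (V (i + 1)) ∧ (V (i + 1)).Nonempty ∧ V (i + 1) ⊆ alphaMoveStar τ V i) →
    IsOpen (alphaMoveStar τ V n) ∧ (alphaMoveStar τ V n).Nonempty ∧ alphaMoveStar τ V n ⊆ V n

/-- `V` is a full run of legal moves of β against the α-strategy `τ` in `𝒥*`. -/
def BetaLegalRunStar (τ : AlphaStrategyStar X) (V : ℕ → Set X) : Prop :=
  IsOpen (V 0) ∧ (V 0).Nonempty ∧
    ∀ n, IsOpen (V (n + 1)) ∧ (V (n + 1)).Nonempty ∧ V (n + 1) ⊆ alphaMoveStar τ V n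

/-- `τ` is a winning strategy for α in the game `𝒥*_Γ`. -/
def AlphaWinningStar (Γ : Set (X → ℝ)) (τ : AlphaStrategyStar X) : Prop :=
  AlphaStratLegalStar τ ∧
    ∀ V, BetaLegalRunStar τ V → AlphaWinsStar Γ (fun n => alphaMoveStar τ V n)

/-- `τ` is a conditionally winning strategy for α in the game `𝒥*_Γ`. -/
def CondAlphaWinningStar (Γ : Set (X → ℝ)) (τ : AlphaStrategyStar X) : Prop :=
  AlphaStratLegalStar τ ∧
    ∀ V, BetaLegalRunStar τ V → (⋂ n, alphaMoveStar τ V n).Nonempty →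
      AlphaWinsStar Γ (fun n => alphaMoveStar τ V n)

/-- `X` is σ*_Γ-α-favorable. -/
def SigmaStarAlphaFavorable (X : Type*) [TopologicalSpace X] (Γ : Set (X → ℝ)) : Prop :=
  ∃ τ : AlphaStrategyStar X, AlphaWinningStar Γ τ

/-- `X` is conditionally σ*_Γ-α-favorable. -/
def CondSigmaStarAlphaFavorable (X : Type*) [TopologicalSpace X] (Γ : Set (X → ℝ)) : Prop :=
  ∃ τ : AlphaStrategyStar X, CondAlphaWinningStar Γ τ

/-! ### Auxiliary notions -/

/-- `f : X × K → ℝ` is separately continuous. -/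
def SeparatelyContinuous {K : Type*} [TopologicalSpace K] (f : X × K → ℝ) : Prop :=
  (∀ x, Continuous fun y => f (x, y)) ∧ (∀ y, Continuous fun x => f (x, y))

/-- The map `φ : K → ℝ^X`, `φ(y)(x) = f(x, y)`. -/
def phi {X K : Type*} (f : X × K → ℝ) (y : K) : X → ℝ := fun x => f (x, y)

/-- A sequence `(Wₙ)` of subsets of `K` is countably pair complete with respect to `(φ, Γ)`:
for all sequences `yₙ, zₙ ∈ Wₙ`, the sequence `φ(yₙ) - φ(zₙ)` has a cluster point in `Γ`
(`ℝ^X` carrying the product, i.e. pointwise convergence, topology). -/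
def PairComplete {K : Type*} (f : X × K → ℝ) (Γ : Set (X → ℝ)) (W : ℕ → Set K) : Prop :=
  ∀ y z : ℕ → K, (∀ n, y n ∈ W n) → (∀ n, z n ∈ W n) →
    ∃ g ∈ Γ, MapClusterPt g atTop (fun n => phi f (y n) - phi f (z n))

/-- `f` is ε-continuous at `p`. -/
def EpsCont {K : Type*} [TopologicalSpace K] (f : X × K → ℝ) (ε : ℝ) (p : X × K) : Prop :=
  ∃ O ∈ 𝓝 p, ∀ q ∈ O, |f p - f q| < ε

/-- `Y` is a bounded subset of `Z`: every continuous real-valued function on `Z`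
is bounded on `Y`. -/
def BoundedIn {Z : Type*} [TopologicalSpace Z] (Y : Set Z) : Prop :=
  ∀ g : Z → ℝ, Continuous g → ∃ M, ∀ y ∈ Y, |g y| ≤ M

/-- `Y` is relatively countably compact in `Z`: every sequence in `Y` has a cluster
point in `Z`. -/
def RelCountablyCompact {Z : Type*} [TopologicalSpace Z] (Y : Set Z) : Prop :=
  ∀ u : ℕ → Z, (∀ n, u n ∈ Y) → ∃ z : Z, MapClusterPt z atTop u

/-- `K` is pseudocompact: Tychonoff and every continuous real-valued function is bounded. -/
def Pseudocompact (K : Type*) [TopologicalSpace K] : Prop :=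
  T35Space K ∧ BoundedIn (Set.univ : Set K)

/-- `Y` is Čech-complete: Tychonoff, and there is a sequence of open covers of `Y` which is
complete: any filter base of nonempty closed sets, containing for each `n` a set included
in a member of the `n`-th cover, has nonempty intersection. -/
def CechComplete (Y : Type*) [TopologicalSpace Y] : Prop :=
  T35Space Y ∧ ∃ 𝒰 : ℕ → Set (Set Y),
    (∀ n, ∀ U ∈ 𝒰 n, IsOpen U) ∧ (∀ n, ⋃₀ 𝒰 n = Set.univ) ∧
    ∀ ℱ : Set (Set Y),
      (∀ F ∈ ℱ, IsClosed F) → ℱ.Nonempty → (∀ F ∈ ℱ, F.Nonempty) →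
      (∀ F₁ ∈ ℱ, ∀ F₂ ∈ ℱ, ∃ F₃ ∈ ℱ, F₃ ⊆ F₁ ∩ F₂) →
      (∀ n, ∃ F ∈ ℱ, ∃ U ∈ 𝒰 n, F ⊆ U) →
      (⋂₀ ℱ).Nonempty

/-- `Y` is a p-space: Tychonoff, and there is a sequence `(𝒰ₙ)` of open covers of `Y` such
that each `x ∈ Y` has a sequence `Uₙ ∈ 𝒰ₙ` of members containing it whose intersection is
compact and for which `(⋂_{i ≤ n} Uᵢ)ₙ` is an outer base of `⋂ₙ Uₙ`. -/
def PSpace (Y : Type*) [TopologicalSpace Y] : Prop :=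
  T35Space Y ∧ ∃ 𝒰 : ℕ → Set (Set Y),
    (∀ n, ∀ U ∈ 𝒰 n, IsOpen U) ∧ (∀ n, ⋃₀ 𝒰 n = Set.univ) ∧
    ∀ x : Y, ∃ U : ℕ → Set Y, (∀ n, U n ∈ 𝒰 n) ∧ (∀ n, x ∈ U n) ∧
      IsCompact (⋂ n, U n) ∧
      ∀ W : Set Y, IsOpen W → (⋂ n, U n) ⊆ W → ∃ m, (⋂ i ≤ m, U i) ⊆ W

/-- `X` is a Namioka space: for every compact Hausdorff `K`, every separately continuous
`f : X × K → ℝ` is jointly continuous at each point of `R × K` for some dense `R ⊆ X`. -/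
def NamiokaSpace (X : Type*) [TopologicalSpace X] : Prop :=
  ∀ (K : Type*) [TopologicalSpace K], CompactSpace K → T2Space K →
    ∀ f : X × K → ℝ, SeparatelyContinuous f →
      ∃ R : Set X, Dense R ∧ ∀ x ∈ R, ∀ y : K, ContinuousAt f (x, y)

/-- `A` is C-embedded in `Y`: every continuous real-valued function on `A` extends
continuously to `Y`. -/
def CEmbedded {Y : Type*} [TopologicalSpace Y] (A : Set Y) : Prop :=
  ∀ g : A → ℝ, Continuous g → ∃ G : Y → ℝ, Continuous G ∧ ∀ a : A, G a = g a

/-- `A` is C*-embedded in `Y`: every bounded continuous real-valued function on `A`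
extends continuously to `Y`. -/
def CStarEmbedded {Y : Type*} [TopologicalSpace Y] (A : Set Y) : Prop :=
  ∀ g : A → ℝ, Continuous g → (∃ M, ∀ a, |g a| ≤ M) →
    ∃ G : Y → ℝ, Continuous G ∧ ∀ a : A, G a = g a

/-- The family `F ⊆ ℝ^X` is equicontinuous at `x`. -/
def EquicontAt (F : Set (X → ℝ)) (x : X) : Prop :=
  ∀ ε > 0, ∃ U ∈ 𝓝 x, ∀ y ∈ U, ∀ g ∈ F, |g x - g y| < ε

end SepJoint

namespace BCTaux
variable {X : Type*} [TopologicalSpace X]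

lemma isMeagre_union' {s t : Set X} (hs : IsMeagre s) (ht : IsMeagre t) : IsMeagre (s ∪ t) := by
  rw [IsMeagre, compl_union]; exact inter_mem hs ht

lemma nwd_isMeagre {s : Set X} (hs : IsNowhereDense s) : IsMeagre s := by
  have h1 : IsClosed (closure s) := isClosed_closure
  have h2 : Dense (closure s)ᶜ := by
    rw [← interior_eq_empty_iff_dense_compl]
    simpa [IsNowhereDense, closure_closure] using hs.closure
  have : (closure s)ᶜ ∈ residual X := residual_of_dense_open h1.isOpen_compl h2
  exact Filter.mem_of_superset this (compl_subset_compl.mpr subset_closure)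

lemma isMeagre_iff_seq {s : Set X} :
    IsMeagre s ↔ ∃ F : ℕ → Set X, (∀ n, IsNowhereDense (F n)) ∧ s ⊆ ⋃ n, F n := by
  constructor
  · intro h
    rcases isMeagre_iff_countable_union_isNowhereDense.1 h with ⟨S, hnwd, hc, hsub⟩
    rcases S.eq_empty_or_nonempty with rfl | hne
    · exact ⟨fun _ => ∅, fun _ => isNowhereDense_empty, by simpa using hsub⟩
    · rcases hc.exists_eq_range hne with ⟨g, rfl⟩
      exact ⟨g, fun n => hnwd _ ⟨n, rfl⟩, by rwa [sUnion_range] at hsub⟩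
  · rintro ⟨F, hnwd, hsub⟩
    exact (isMeagre_iUnion fun n => nwd_isMeagre (hnwd n)).mono hsub

lemma isNowhereDense_closure_diff {D : Set X} (hD : IsOpen D) :
    IsNowhereDense (closure D \ D) := by
  rw [IsNowhereDense, eq_empty_iff_forall_notMem]
  intro x hx
  have hsub : closure (closure D \ D) ⊆ closure D ∩ Dᶜ := by
    apply closure_minimal _ (isClosed_closure.inter hD.isClosed_compl)
    exact fun z hz => ⟨hz.1, hz.2⟩
  have hxm : x ∈ closure D := (hsub (interior_subset hx)).1
  have hO : interior (closure (closure D \ D)) ∈ 𝓝 x := isOpen_interior.mem_nhds hx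
  rcases mem_closure_iff_nhds.1 hxm _ hO with ⟨z, hz1, hz2⟩
  exact (hsub (interior_subset hz1)).2 hz2

/-- Core of the Banach category theorem packaged as: a non-meagre set has an open set
on which it is everywhere non-meagre. -/
lemma exists_open_everywhere_nonmeagre {C : Set X} (hC : ¬ IsMeagre C) :
    ∃ V : Set X, IsOpen V ∧ V.Nonempty ∧
      ∀ U, IsOpen U → U.Nonempty → U ⊆ V → ¬ IsMeagre (C ∩ U) := by
  classical
  set 𝒮 : Set (Set X) := {U | IsOpen U ∧ IsMeagre (C ∩ U)} with h𝒮
  -- a maximal pairwise disjoint subfamily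
  obtain ⟨𝒟, h𝒟max⟩ := zorn_subset {𝒟 : Set (Set X) | 𝒟 ⊆ 𝒮 ∧ 𝒟.Pairwise (Disjoint · ·)}
    (by
      intro c hc hchain
      refine ⟨⋃₀ c, ⟨?_, ?_⟩, fun s hs => subset_sUnion_of_mem hs⟩
      · intro u hu
        rcases mem_sUnion.1 hu with ⟨d, hd, hud⟩
        exact (hc hd).1 hud
      · intro u hu v hv huv
        rcases mem_sUnion.1 hu with ⟨d, hd, hud⟩
        rcases mem_sUnion.1 hv with ⟨e, he, hve⟩
        rcases hchain.total hd he with hde | hed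
        · exact (hc he).2 (hde hud) hve huv
        · exact (hc hd).2 hud (hed hve) huv)
  have h𝒟S : 𝒟 ⊆ 𝒮 := h𝒟max.prop.1
  have h𝒟dis : 𝒟.Pairwise (Disjoint · ·) := h𝒟max.prop.2
  set D : Set X := ⋃₀ 𝒟 with hD
  have hDopen : IsOpen D := isOpen_sUnion fun U hU => (h𝒟S hU).1
  -- choose nwd decompositions
  have hch : ∀ U ∈ 𝒟, ∃ F : ℕ → Set X, (∀ n, IsNowhereDense (F n)) ∧ C ∩ U ⊆ ⋃ n, F n :=
    fun U hU => isMeagre_iff_seq.1 (h𝒟S hU).2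
  choose! F hFnwd hFsub using hch
  set A : ℕ → Set X := fun n => ⋃ U ∈ 𝒟, (F U n ∩ U) with hA
  have hAD : ∀ n, A n ⊆ D := by
    intro n x hx
    rcases mem_iUnion₂.1 hx with ⟨U, hU, hxU⟩
    exact ⟨U, hU, hxU.2⟩
  have hAnwd : ∀ n, IsNowhereDense (A n) := by
    intro n
    rw [IsNowhereDense, eq_empty_iff_forall_notMem]
    intro x hx
    set O := interior (closure (A n)) with hO
    have hOopen : IsOpen O := isOpen_interior
    have hOsub : O ⊆ closure (A n) := interior_subset
    have hxD : x ∈ closure D := closure_mono (hAD n) (hOsub hx)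
    rcases mem_closure_iff_nhds.1 hxD _ (hOopen.mem_nhds hx) with ⟨z, hzO, hzD⟩
    rcases hzD with ⟨U, hU𝒟, hzU⟩
    -- O ∩ U minus the closure of F U n is nonempty open
    have hOU : IsOpen (O ∩ U) := hOopen.inter (h𝒟S hU𝒟).1
    have hne : ((O ∩ U) \ closure (F U n)).Nonempty := by
      by_contra hem
      rw [not_nonempty_iff_eq_empty, diff_eq_empty] at hem
      have : O ∩ U ⊆ interior (closure (F U n)) := hOU.subset_interior_iff.2 hem
      rw [hFnwd U hU𝒟 n] at this
      exact this ⟨hzO, hzU⟩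
    rcases hne with ⟨w, hw⟩
    have hwA : ((O ∩ U) \ closure (F U n) ∩ A n).Nonempty := by
      have hwcl : w ∈ closure (A n) := hOsub hw.1.1
      have : (O ∩ U) \ closure (F U n) ∈ 𝓝 w :=
        (hOU.sdiff isClosed_closure).mem_nhds hw
      rcases mem_closure_iff_nhds.1 hwcl _ this with ⟨v, hv1, hv2⟩
      exact ⟨v, hv1, hv2⟩
    rcases hwA with ⟨v, hv1, hv2⟩
    rcases mem_iUnion₂.1 hv2 with ⟨U', hU'𝒟, hvU'⟩
    have hUU' : U = U' := by
      by_contra hne'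
      exact Set.disjoint_left.1 (h𝒟dis hU𝒟 hU'𝒟 hne') hv1.1.2 hvU'.2
    subst hUU'
    exact hv1.2 (subset_closure hvU'.1)
  -- C ∩ ⋃₀𝒮 is meagre
  have hmain : IsMeagre (C ∩ ⋃₀ 𝒮) := by
    have hsub : C ∩ ⋃₀ 𝒮 ⊆ (closure D \ D) ∪ ⋃ n, A n := by
      rintro x ⟨hxC, U₀, hU₀, hxU₀⟩
      by_cases hxD : x ∈ D
      · rcases hxD with ⟨U, hU𝒟, hxU⟩
        rcases mem_iUnion.1 (hFsub U hU𝒟 ⟨hxC, hxU⟩) with ⟨n, hn⟩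
        exact Or.inr (mem_iUnion.2 ⟨n, mem_iUnion₂.2 ⟨U, hU𝒟, hn, hxU⟩⟩)
      · by_cases hxcl : x ∈ closure D
        · exact Or.inl ⟨hxcl, hxD⟩
        · exfalso
          set U' : Set X := U₀ \ closure D with hU'
          have hU'S : U' ∈ 𝒮 := ⟨hU₀.1.sdiff isClosed_closure,
            (hU₀.2).mono (inter_subset_inter_right _ diff_subset)⟩
          have hU'ne : U'.Nonempty := ⟨x, hxU₀, hxcl⟩
          have hins : insert U' 𝒟 ∈ {𝒟 : Set (Set X) | 𝒟 ⊆ 𝒮 ∧ 𝒟.Pairwise (Disjoint · ·)} := by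
            constructor
            · exact insert_subset hU'S h𝒟S
            · refine Set.Pairwise.insert h𝒟dis fun U hU _ => ?_
              have hdisj : Disjoint U' U := by
                refine Set.disjoint_left.2 fun z hz hzU => hz.2 ?_
                exact subset_closure ⟨U, hU, hzU⟩
              exact ⟨hdisj, hdisj.symm⟩
          have : insert U' 𝒟 ⊆ 𝒟 := h𝒟max.2 hins (subset_insert _ _)
          have hU'𝒟 : U' ∈ 𝒟 := this (mem_insert _ _)
          rcases hU'ne with ⟨z, hz⟩
          exact hz.2 (subset_closure ⟨U', hU'𝒟, hz⟩)
    refine (isMeagre_union' (nwd_isMeagre (isNowhereDense_closure_diff hDopen))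
      (isMeagre_iUnion fun n => nwd_isMeagre (hAnwd n))).mono hsub
  -- conclude
  set V : Set X := (closure (⋃₀ 𝒮))ᶜ with hV
  have hVopen : IsOpen V := isClosed_closure.isOpen_compl
  have hCV : ¬ IsMeagre (C ∩ V) := by
    intro hme
    apply hC
    have : C ⊆ (C ∩ ⋃₀ 𝒮) ∪ (closure (⋃₀ 𝒮) \ ⋃₀ 𝒮) ∪ (C ∩ V) := by
      intro x hx
      by_cases h1 : x ∈ ⋃₀ 𝒮
      · exact Or.inl (Or.inl ⟨hx, h1⟩)
      · by_cases h2 : x ∈ closure (⋃₀ 𝒮)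
        · exact Or.inl (Or.inr ⟨h2, h1⟩)
        · exact Or.inr ⟨hx, h2⟩
    have hSopen : IsOpen (⋃₀ 𝒮) := isOpen_sUnion fun U hU => hU.1
    exact (isMeagre_union' (isMeagre_union' hmain
      (nwd_isMeagre (isNowhereDense_closure_diff hSopen))) hme).mono this
  refine ⟨V, hVopen, ?_, ?_⟩
  · have hne : (C ∩ V).Nonempty := by
      rcases (C ∩ V).eq_empty_or_nonempty with h | h
      · exact absurd (h ▸ IsMeagre.empty) hCV
      · exact h
    rcases hne with ⟨x, hx⟩
    exact ⟨x, hx.2⟩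
  · intro U hUo hUne hUV hme
    have hUS : U ∈ 𝒮 := ⟨hUo, hme⟩
    rcases hUne with ⟨x, hx⟩
    exact (hUV hx) (subset_closure ⟨U, hUS, hx⟩)

end BCTaux
namespace SepProof
open SepJoint BCTaux

variable {X K : Type*} [TopologicalSpace X] [TopologicalSpace K]

/-- `(x, y)` is an `ε`-bad pair. -/
def Bad (f : X × K → ℝ) (𝒰 : ℕ → ℕ → Set K) (ε : ℝ) (x : X) (y : K) : Prop :=
  ∀ (k : ℕ) (c : ℕ → ℕ), y ∈ (⋂ i ≤ k, 𝒰 i (c i)) → ∀ O ∈ 𝓝 ((x, y) : X × K),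
    ∃ p ∈ O, p.2 ∈ (⋂ i ≤ k, 𝒰 i (c i)) ∧ ε ≤ |f (x, y) - f p|

def memW (𝒰 : ℕ → ℕ → Set K) (s : List ℕ) (y : K) : Prop :=
  ∀ i < s.length, y ∈ 𝒰 i (s.getD i 0)

def BadS (f : X × K → ℝ) (𝒰 : ℕ → ℕ → Set K) (ε : ℝ) (s : List ℕ) : Set X :=
  {x | ∃ y, memW 𝒰 s y ∧ Bad f 𝒰 ε x y}

/-- `C` is everywhere non-meagre in `V`. -/
def ENM (C V : Set X) : Prop :=
  ∀ U, IsOpen U → U.Nonempty → U ⊆ V → ¬ IsMeagre (C ∩ U)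

/-- The state carried by β's strategy. -/
structure St (X K : Type*) where
  V : Set X
  s : List ℕ
  z : K
  y : K

/-- The requirements on a successor state. -/
def StepP (f : X × K → ℝ) (𝒰 : ℕ → ℕ → Set K) (ε : ℝ) (st : St X K) (U : Set X)
    (as : List X) (t : St X K) : Prop :=
  (∃ k, t.s = st.s ++ [k]) ∧ IsOpen t.V ∧ t.V.Nonempty ∧ t.V ⊆ U ∧
  ENM (BadS f 𝒰 ε t.s) t.V ∧ memW 𝒰 t.s t.z ∧ memW 𝒰 t.s t.y ∧
  (∀ x ∈ t.V, ε/2 ≤ |f (x, t.y) - f (x, t.z)|) ∧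
  (∀ b ∈ as, |f (b, t.y) - f (b, t.z)| ≤ ε/4)

lemma step_exists {f : X × K → ℝ} {𝒰 : ℕ → ℕ → Set K} {ε : ℝ}
    (hf : SeparatelyContinuous f) (hε : 0 < ε) (hcov : ∀ n, (⋃ k, 𝒰 n k) = Set.univ)
    (st : St X K) (hENM : ENM (BadS f 𝒰 ε st.s) st.V)
    {U : Set X} (hUo : IsOpen U) (hUne : U.Nonempty) (hUV : U ⊆ st.V) (as : List X) :
    ∃ t, StepP f 𝒰 ε st U as t := by
  classical
  have hnm : ¬ IsMeagre (BadS f 𝒰 ε st.s ∩ U) := hENM U hUo hUne hUV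
  have hsplit : BadS f 𝒰 ε st.s ∩ U ⊆ ⋃ k, (BadS f 𝒰 ε (st.s ++ [k]) ∩ U) := by
    rintro x ⟨⟨y, hymem, hbad⟩, hxU⟩
    have hy : y ∈ ⋃ k, 𝒰 st.s.length k := (hcov st.s.length) ▸ Set.mem_univ y
    rcases Set.mem_iUnion.1 hy with ⟨k, hk⟩
    refine Set.mem_iUnion.2 ⟨k, ⟨⟨y, ?_, hbad⟩, hxU⟩⟩
    intro i hi
    rw [List.length_append] at hi
    simp only [List.length_cons, List.length_nil] at hi
    rcases Nat.lt_or_ge i st.s.length with h | h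
    · rw [List.getD_append _ _ _ _ h]; exact hymem i h
    · have hieq : i = st.s.length := le_antisymm (Nat.lt_succ_iff.1 hi) h
      subst hieq
      rw [List.getD_append_right _ _ _ _ (le_refl _), Nat.sub_self]
      simpa using hk
  have hk : ∃ k, ¬ IsMeagre (BadS f 𝒰 ε (st.s ++ [k]) ∩ U) := by
    by_contra h
    push_neg at h
    exact hnm ((isMeagre_iUnion h).mono hsplit)
  obtain ⟨k, hknm⟩ := hk
  set s' := st.s ++ [k] with hs'
  have hs'len : s'.length = st.s.length + 1 := by simp [hs']
  obtain ⟨V, hVo, hVne, hVenm⟩ := exists_open_everywhere_nonmeagre hknm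
  have hV1enm : ∀ U', IsOpen U' → U'.Nonempty → U' ⊆ V ∩ U →
      ¬ IsMeagre (BadS f 𝒰 ε s' ∩ U') := by
    intro U' ho hne hsub hme
    apply hVenm U' ho hne (hsub.trans Set.inter_subset_left)
    have heq : BadS f 𝒰 ε s' ∩ U ∩ U' = BadS f 𝒰 ε s' ∩ U' := by
      rw [Set.inter_assoc,
        Set.inter_eq_self_of_subset_right (hsub.trans Set.inter_subset_right)]
    rwa [heq]
  have h1 : ¬ IsMeagre ((BadS f 𝒰 ε s' ∩ U) ∩ V) := hVenm V hVo hVne subset_rfl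
  have h2 : ((BadS f 𝒰 ε s' ∩ U) ∩ V).Nonempty := by
    rcases ((BadS f 𝒰 ε s' ∩ U) ∩ V).eq_empty_or_nonempty with h | h
    · exact absurd (h ▸ IsMeagre.empty) h1
    · exact h
  obtain ⟨x₀, ⟨⟨y₀, hy₀mem, hbad⟩, hx₀U⟩, hx₀V⟩ := h2
  set m := st.s.length with hm
  set c : ℕ → ℕ := fun i => s'.getD i 0 with hc
  have hy₀W : y₀ ∈ ⋂ i ≤ m, 𝒰 i (c i) := by
    refine Set.mem_iInter.2 fun i => Set.mem_iInter.2 fun hi => ?_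
    exact hy₀mem i (by omega)
  set O₁ : Set X := (V ∩ U) ∩ {x | |f (x, y₀) - f (x₀, y₀)| < ε/4} with hO₁
  have hO₁o : IsOpen O₁ := by
    refine (hVo.inter hUo).inter ?_
    have : Continuous fun x : X => |f (x, y₀) - f (x₀, y₀)| :=
      (continuous_abs.comp ((hf.2 y₀).sub continuous_const))
    exact isOpen_lt this continuous_const
  have hx₀O₁ : x₀ ∈ O₁ := by
    refine ⟨⟨hx₀V, hx₀U⟩, ?_⟩
    simp only [Set.mem_setOf_eq, sub_self, abs_zero]
    linarith
  set O₂ : Set K := ⋂ b ∈ as.toFinset, {y | |f (b, y) - f (b, y₀)| < ε/4} with hO₂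
  have hO₂o : IsOpen O₂ := by
    refine isOpen_biInter_finset fun b _ => ?_
    have : Continuous fun y : K => |f (b, y) - f (b, y₀)| :=
      (continuous_abs.comp ((hf.1 b).sub continuous_const))
    exact isOpen_lt this continuous_const
  have hy₀O₂ : y₀ ∈ O₂ := by
    refine Set.mem_iInter₂.2 fun b _ => ?_
    simp only [Set.mem_setOf_eq, sub_self, abs_zero]
    linarith
  have hO : O₁ ×ˢ O₂ ∈ 𝓝 ((x₀, y₀) : X × K) :=
    (hO₁o.prod hO₂o).mem_nhds ⟨hx₀O₁, hy₀O₂⟩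
  obtain ⟨p, hpO, hpW, hpd⟩ := hbad m c hy₀W _ hO
  have hp1 : p.1 ∈ O₁ := hpO.1
  have hp2 : p.2 ∈ O₂ := hpO.2
  refine ⟨⟨O₁ ∩ {x | |f (x, p.2) - f (p.1, p.2)| < ε/4}, s', y₀, p.2⟩, ⟨k, rfl⟩, ?_, ?_, ?_, ?_, ?_, ?_, ?_, ?_⟩
  · refine hO₁o.inter ?_
    have : Continuous fun x : X => |f (x, p.2) - f (p.1, p.2)| :=
      (continuous_abs.comp ((hf.2 p.2).sub continuous_const))
    exact isOpen_lt this continuous_const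
  · refine ⟨p.1, hp1, ?_⟩
    simp only [Set.mem_setOf_eq, sub_self, abs_zero]
    linarith
  · exact fun x hx => hx.1.1.2
  · intro U' ho hne hsub
    exact hV1enm U' ho hne (hsub.trans (fun x hx => hx.1.1))
  · exact hy₀mem
  · intro i hi
    rw [hs'len] at hi
    have : i ≤ m := Nat.lt_succ_iff.1 hi
    have := Set.mem_iInter.1 (Set.mem_iInter.1 hpW i) this
    exact this
  · rintro x ⟨hxO₁, hx2⟩
    simp only [Set.mem_setOf_eq] at hx2
    have hA : |f (x, y₀) - f (x₀, y₀)| < ε/4 := hxO₁.2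
    have hC : ε ≤ |f (x₀, y₀) - f p| := hpd
    have t1 : |f (x₀, y₀) - f p| ≤ |f (x₀, y₀) - f (x, y₀)| + |f (x, y₀) - f p| :=
      abs_sub_le _ _ _
    have t2 : |f (x, y₀) - f p| ≤ |f (x, y₀) - f (x, p.2)| + |f (x, p.2) - f p| :=
      abs_sub_le _ _ _
    have e1 : |f (x₀, y₀) - f (x, y₀)| = |f (x, y₀) - f (x₀, y₀)| := abs_sub_comm _ _
    have e2 : |f (x, y₀) - f (x, p.2)| = |f (x, p.2) - f (x, y₀)| := abs_sub_comm _ _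
    have e3 : f p = f (p.1, p.2) := rfl
    rw [e3] at t1 t2 hC
    linarith
  · intro b hb
    have := Set.mem_iInter₂.1 hp2 b (List.mem_toFinset.2 hb)
    simp only [Set.mem_setOf_eq] at this
    exact le_of_lt this

end SepProof
namespace SepProof
open SepJoint BCTaux

variable {X K : Type*} [TopologicalSpace X] [TopologicalSpace K]

/-- Requirements on the initial state. -/
def InitP (f : X × K → ℝ) (𝒰 : ℕ → ℕ → Set K) (ε : ℝ) (t : St X K) : Prop :=
  t.s.length = 1 ∧ IsOpen t.V ∧ t.V.Nonempty ∧ ENM (BadS f 𝒰 ε t.s) t.V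

open Classical in
noncomputable def init (f : X × K → ℝ) (𝒰 : ℕ → ℕ → Set K) (ε : ℝ) (y0 : K) : St X K :=
  if h : ∃ t : St X K, InitP f 𝒰 ε t then h.choose else ⟨Set.univ, [0], y0, y0⟩

lemma init_spec {f : X × K → ℝ} {𝒰 : ℕ → ℕ → Set K} {ε : ℝ} (y0 : K)
    (h : ∃ t : St X K, InitP f 𝒰 ε t) : InitP f 𝒰 ε (init f 𝒰 ε y0) := by
  classical
  rw [init, dif_pos h]; exact h.choose_spec

open Classical in
noncomputable def step (f : X × K → ℝ) (𝒰 : ℕ → ℕ → Set K) (ε : ℝ) (st : St X K)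
    (U : Set X) (as : List X) : St X K :=
  if h : ∃ t, StepP f 𝒰 ε st U as t then h.choose else st

lemma step_spec {f : X × K → ℝ} {𝒰 : ℕ → ℕ → Set K} {ε : ℝ} {st : St X K}
    {U : Set X} {as : List X} (h : ∃ t, StepP f 𝒰 ε st U as t) :
    StepP f 𝒰 ε st U as (step f 𝒰 ε st U as) := by
  classical
  rw [step, dif_pos h]; exact h.choose_spec

noncomputable def states (f : X × K → ℝ) (𝒰 : ℕ → ℕ → Set K) (ε : ℝ) (y0 : K) :
    List (Set X × X) → St X K
  | [] => init f 𝒰 ε y0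
  | p :: t => step f 𝒰 ε (states f 𝒰 ε y0 t) p.1 ((p :: t).map Prod.snd)

noncomputable def strat (f : X × K → ℝ) (𝒰 : ℕ → ℕ → Set K) (ε : ℝ) (y0 : K) :
    BetaStrategy X :=
  fun h => (states f 𝒰 ε y0 h.reverse).V

lemma hist_succ {A : Type*} (g : ℕ → A) (n : ℕ) : hist g (n + 1) = hist g n ++ [g n] := by
  show List.ofFn _ = _
  rw [List.ofFn_succ', List.concat_eq_append]
  rfl

lemma hist_rev {A : Type*} (g : ℕ → A) (n : ℕ) :
    (hist g (n + 1)).reverse = g n :: (hist g n).reverse := by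
  rw [hist_succ]; simp

noncomputable def runStates (f : X × K → ℝ) (𝒰 : ℕ → ℕ → Set K) (ε : ℝ) (y0 : K)
    (U : ℕ → Set X) (a : ℕ → X) (n : ℕ) : St X K :=
  states f 𝒰 ε y0 ((hist (fun j => (U j, a j)) n).reverse)

lemma runStates_succ (f : X × K → ℝ) (𝒰 : ℕ → ℕ → Set K) (ε : ℝ) (y0 : K)
    (U : ℕ → Set X) (a : ℕ → X) (n : ℕ) :
    runStates f 𝒰 ε y0 U a (n + 1) =
      step f 𝒰 ε (runStates f 𝒰 ε y0 U a n) (U n)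
        (a n :: ((hist (fun j => (U j, a j)) n).reverse.map Prod.snd)) := by
  rw [runStates, hist_rev]
  rfl

omit [TopologicalSpace X] in
lemma mem_asList {U : ℕ → Set X} {a : ℕ → X} {n m : ℕ} (h : m < n) :
    a m ∈ (hist (fun j => (U j, a j)) n).reverse.map Prod.snd := by
  refine List.mem_map.2 ⟨(U m, a m), ?_, rfl⟩
  rw [List.mem_reverse]
  exact List.mem_ofFn.2 ⟨⟨m, h⟩, rfl⟩

lemma init_exists {f : X × K → ℝ} {𝒰 : ℕ → ℕ → Set K} {ε : ℝ}
    (hcov : ∀ n, (⋃ k, 𝒰 n k) = Set.univ)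
    (hB : ¬ IsMeagre {x : X | ∃ y : K, Bad f 𝒰 ε x y}) :
    ∃ t : St X K, InitP f 𝒰 ε t := by
  have hBne : {x : X | ∃ y : K, Bad f 𝒰 ε x y}.Nonempty := by
    rcases {x : X | ∃ y : K, Bad f 𝒰 ε x y}.eq_empty_or_nonempty with h | h
    · exact absurd (h ▸ IsMeagre.empty) hB
    · exact h
  obtain ⟨x₀, y₀, -⟩ := hBne
  have hsplit : {x : X | ∃ y : K, Bad f 𝒰 ε x y} ⊆ ⋃ k, BadS f 𝒰 ε [k] := by
    rintro x ⟨y, hb⟩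
    have hy : y ∈ ⋃ k, 𝒰 0 k := hcov 0 ▸ Set.mem_univ y
    rcases Set.mem_iUnion.1 hy with ⟨k, hk⟩
    refine Set.mem_iUnion.2 ⟨k, y, ?_, hb⟩
    intro i hi
    have hi0 : i = 0 := by simpa using Nat.lt_one_iff.1 (by simpa using hi)
    subst hi0
    simpa using hk
  obtain ⟨k, hknm⟩ : ∃ k, ¬ IsMeagre (BadS f 𝒰 ε ([k] : List ℕ)) := by
    by_contra h
    push_neg at h
    exact hB ((isMeagre_iUnion h).mono hsplit)
  obtain ⟨V, hVo, hVne, hVenm⟩ := exists_open_everywhere_nonmeagre hknm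
  exact ⟨⟨V, [k], y₀, y₀⟩, by simp, hVo, hVne, hVenm⟩

/-- Master induction: along any α-legal play the states behave as expected. -/
lemma master {f : X × K → ℝ} {𝒰 : ℕ → ℕ → Set K} {ε : ℝ} (y0 : K)
    (hf : SeparatelyContinuous f) (hε : 0 < ε) (hcov : ∀ n, (⋃ k, 𝒰 n k) = Set.univ)
    (hInit : ∃ t : St X K, InitP f 𝒰 ε t) (U : ℕ → Set X) (a : ℕ → X) :
    ∀ n, AlphaLegal (strat f 𝒰 ε y0) U a n →
      (IsOpen (runStates f 𝒰 ε y0 U a n).V ∧ (runStates f 𝒰 ε y0 U a n).V.Nonempty ∧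
        ENM (BadS f 𝒰 ε (runStates f 𝒰 ε y0 U a n).s) (runStates f 𝒰 ε y0 U a n).V) ∧
      (∀ m, n = m + 1 → StepP f 𝒰 ε (runStates f 𝒰 ε y0 U a m) (U m)
        (a m :: ((hist (fun j => (U j, a j)) m).reverse.map Prod.snd))
        (runStates f 𝒰 ε y0 U a n)) := by
  intro n
  induction n with
  | zero =>
    intro _
    obtain ⟨h1, h2, h3, h4⟩ := init_spec y0 hInit
    exact ⟨⟨h2, h3, h4⟩, fun m hm => by omega⟩
  | succ n IH =>
    intro hA
    have hAn : AlphaLegal (strat f 𝒰 ε y0) U a n := fun i hi => hA i (Nat.lt_succ_of_lt hi)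
    obtain ⟨⟨ho, hne, hENM⟩, -⟩ := IH hAn
    obtain ⟨hUo, hUne, hUV⟩ := hA n (Nat.lt_succ_self n)
    have hUV' : U n ⊆ (runStates f 𝒰 ε y0 U a n).V := hUV
    have hex := step_exists hf hε hcov (runStates f 𝒰 ε y0 U a n) hENM hUo hUne hUV'
      (a n :: ((hist (fun j => (U j, a j)) n).reverse.map Prod.snd))
    have hsp := step_spec hex
    rw [← runStates_succ] at hsp
    refine ⟨⟨hsp.2.1, hsp.2.2.1, hsp.2.2.2.2.1⟩, ?_⟩
    intro m hm
    have hmn : m = n := by omega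
    subst hmn
    exact hsp

end SepProof
namespace SepProof
open SepJoint BCTaux

variable {X K : Type*} [TopologicalSpace X] [TopologicalSpace K]

lemma runStates_zero (f : X × K → ℝ) (𝒰 : ℕ → ℕ → Set K) (ε : ℝ) (y0 : K)
    (U : ℕ → Set X) (a : ℕ → X) :
    runStates f 𝒰 ε y0 U a 0 = init f 𝒰 ε y0 := by
  show states _ _ _ _ ((List.ofFn _).reverse) = _
  rw [List.ofFn_zero, List.reverse_nil, states]

lemma beta_winning {f : X × K → ℝ} {𝒰 : ℕ → ℕ → Set K} {ε : ℝ} (y0 : K)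
    (hf : SeparatelyContinuous f) (hε : 0 < ε) (hcov : ∀ n, (⋃ k, 𝒰 n k) = Set.univ)
    (hInit : ∃ t : St X K, InitP f 𝒰 ε t) (Γ : Set (X → ℝ))
    (hpc : ∀ c : ℕ → ℕ, PairComplete f Γ (fun n => ⋂ i ≤ n, 𝒰 i (c i)))
    (U : ℕ → Set X) (a : ℕ → X)
    (hA : ∀ n, AlphaLegal (strat f 𝒰 ε y0) U a n) :
    ¬ AlphaWinsGamma Γ U a := by
  intro hwin
  set S : ℕ → St X K := runStates f 𝒰 ε y0 U a with hS
  have hstep : ∀ n, StepP f 𝒰 ε (S n) (U n)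
      (a n :: ((hist (fun j => (U j, a j)) n).reverse.map Prod.snd)) (S (n + 1)) :=
    fun n => (master y0 hf hε hcov hInit U a (n + 1) (hA (n + 1))).2 n rfl
  have hlen : ∀ n, (S n).s.length = n + 1 := by
    intro n
    induction n with
    | zero =>
      have h0 : S 0 = init f 𝒰 ε y0 := runStates_zero f 𝒰 ε y0 U a
      rw [h0]
      exact (init_spec y0 hInit).1
    | succ n IH =>
      obtain ⟨k, hk⟩ := (hstep n).1
      rw [hk, List.length_append, IH]
      rfl
  have hchain : ∀ n, ∃ k, (S (n + 1)).s = (S n).s ++ [k] := fun n => (hstep n).1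
  set c : ℕ → ℕ := fun i => (S (i + 1)).s.getD i 0 with hc
  have hgetD : ∀ n i, i ≤ n → (S (n + 1)).s.getD i 0 = c i := by
    intro n
    induction n with
    | zero =>
      intro i hi
      have : i = 0 := by omega
      subst this; rfl
    | succ n IH =>
      intro i hi
      rcases Nat.lt_or_ge i (n + 1) with h | h
      · obtain ⟨k, hk⟩ := hchain (n + 1)
        rw [hk, List.getD_append _ _ _ _ (by rw [hlen]; omega)]
        exact IH i (by omega)
      · have : i = n + 1 := by omega
        subst this; rfl
  have hymem : ∀ n, (S (n + 1)).y ∈ ⋂ i ≤ n, 𝒰 i (c i) := by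
    intro n
    refine Set.mem_iInter.2 fun i => Set.mem_iInter.2 fun hi => ?_
    have hm := (hstep n).2.2.2.2.2.2.1 i (by rw [hlen]; omega)
    rwa [hgetD n i hi] at hm
  have hzmem : ∀ n, (S (n + 1)).z ∈ ⋂ i ≤ n, 𝒰 i (c i) := by
    intro n
    refine Set.mem_iInter.2 fun i => Set.mem_iInter.2 fun hi => ?_
    have hm := (hstep n).2.2.2.2.2.1 i (by rw [hlen]; omega)
    rwa [hgetD n i hi] at hm
  obtain ⟨g, hgΓ, hgcl⟩ := hpc c (fun n => (S (n + 1)).y) (fun n => (S (n + 1)).z) hymem hzmem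
  obtain ⟨t, htU, htcl⟩ := hwin g hgΓ
  have hcl_mem : ∀ (x : X) (s : Set ℝ), IsClosed s →
      (∀ᶠ n in atTop, f (x, (S (n + 1)).y) - f (x, (S (n + 1)).z) ∈ s) → g x ∈ s := by
    intro x s hs hev
    have h1 : MapClusterPt (g x) atTop
        (fun n => f (x, (S (n + 1)).y) - f (x, (S (n + 1)).z)) :=
      MapClusterPt.continuousAt_comp (f := fun h : X → ℝ => h x)
        (continuous_apply x).continuousAt hgcl
    have h2 : ClusterPt (g x) (𝓟 s) := h1.clusterPt.mono (le_principal_iff.2 (mem_map.2 hev))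
    rw [← hs.closure_eq]
    exact mem_closure_iff_clusterPt.2 h2
  have hUsubV : ∀ n, U n ⊆ (S n).V := fun n => (hA (n + 1) n (Nat.lt_succ_self n)).2.2
  have ht1 : ε / 2 ≤ |g t| := by
    refine hcl_mem t {r | ε / 2 ≤ |r|} (isClosed_le continuous_const continuous_abs)
      (Eventually.of_forall fun n => ?_)
    have htV : t ∈ (S (n + 1)).V := hUsubV (n + 1) (Set.mem_iInter.1 htU (n + 1))
    exact (hstep n).2.2.2.2.2.2.2.1 t htV
  have ht2 : ∀ m, |g (a m)| ≤ ε / 4 := by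
    intro m
    refine hcl_mem (a m) {r | |r| ≤ ε / 4} (isClosed_le continuous_abs continuous_const) ?_
    filter_upwards [eventually_ge_atTop m] with n hn
    refine (hstep n).2.2.2.2.2.2.2.2 (a m) ?_
    rcases Nat.lt_or_ge m n with h | h
    · exact List.mem_cons_of_mem _ (mem_asList h)
    · have : m = n := by omega
      subst this
      exact List.mem_cons_self
  have ht3 : |g t| ≤ ε / 4 := by
    have hsub : closure (Set.range fun m => g (a m)) ⊆ {r | |r| ≤ ε / 4} := by
      apply closure_minimal ?_ (isClosed_le continuous_abs continuous_const)
      rintro r ⟨m, rfl⟩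
      exact ht2 m
    exact hsub htcl
  linarith

end SepProof
open SepJoint in
/-- Theorem 3.1: if `X` is σ_Γ-β-defavorable and `(𝒰ₙ)` is a sequence of
countable covers of `K` which is countably pair complete with respect to `(φ, Γ)`, then for
every `ε > 0` there is a residual set `R_ε ⊆ X` such that every `(x, y) ∈ R_ε × K`
satisfies property `(*)`. -/
theorem residual_epsilon_continuity_of_pairComplete_covers
    {X K : Type*} [TopologicalSpace X] [TopologicalSpace K]
    (f : X × K → ℝ) (hf : SeparatelyContinuous f)
    (Γ : Set (X → ℝ)) (𝒰 : ℕ → ℕ → Set K)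
    (hcover : ∀ n, (⋃ k, 𝒰 n k) = Set.univ)
    (hX : SigmaGammaBetaDefavorable X Γ)
    (hpc : ∀ c : ℕ → ℕ, PairComplete f Γ (fun n => ⋂ i ≤ n, 𝒰 i (c i))) :
    ∀ ε : ℝ, 0 < ε → ∃ R ∈ residual X, ∀ x ∈ R, ∀ y : K,
      ∃ (k : ℕ) (c : ℕ → ℕ), y ∈ (⋂ i ≤ k, 𝒰 i (c i)) ∧
        ∃ O ∈ 𝓝 ((x, y) : X × K), ∀ p ∈ O, p.2 ∈ (⋂ i ≤ k, 𝒰 i (c i)) →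
          |f (x, y) - f p| < ε := by
  intro ε hε
  classical
  by_cases hm : IsMeagre {x : X | ∃ y : K, SepProof.Bad f 𝒰 ε x y}
  · refine ⟨{x : X | ∃ y : K, SepProof.Bad f 𝒰 ε x y}ᶜ, hm, ?_⟩
    intro x hx y
    have hnb : ¬ SepProof.Bad f 𝒰 ε x y := fun hb => hx ⟨y, hb⟩
    unfold SepProof.Bad at hnb
    push_neg at hnb
    obtain ⟨k, c, hyW, O, hO, hsm⟩ := hnb
    exact ⟨k, c, hyW, O, hO, hsm⟩
  · exfalso
    apply hX
    have hBne : {x : X | ∃ y : K, SepProof.Bad f 𝒰 ε x y}.Nonempty := by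
      rcases {x : X | ∃ y : K, SepProof.Bad f 𝒰 ε x y}.eq_empty_or_nonempty with h | h
      · exact absurd (h ▸ IsMeagre.empty) hm
      · exact h
    obtain ⟨x₀, y₀, -⟩ := hBne
    have hInit : ∃ t : SepProof.St X K, SepProof.InitP f 𝒰 ε t :=
      SepProof.init_exists hcover hm
    refine ⟨SepProof.strat f 𝒰 ε y₀, ?_, ?_⟩
    · intro U a n hA
      obtain ⟨⟨ho, hne, -⟩, hstep⟩ :=
        SepProof.master y₀ hf hε hcover hInit U a n hA
      exact ⟨ho, hne, fun m hm' => (hstep m hm').2.2.2.1⟩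
    · intro U a hA
      exact SepProof.beta_winning y₀ hf hε hcover hInit Γ hpc U a hA
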